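/- Let n ≥ 1, let μ ∈ ℝⁿ have all entries strictly positive, and for each permutation η of {1,…,n} let f_{·,η} ∈ ℝⁿ have nonnegative entries with Σ_{l=1}^n f_{l,η} = 1. For a pair (η,m) with Σ_{l=1}^m f_{l,η} > 0 define h(η,m) = (Σ_{l=1}^m μ_{η(l)})/(Σ_{l=1}^m f_{l,η}), and let h* be the minimum of h over all such pairs. Assume h* < Σ_{l=1}^n μ_l, let η† be a permutation attaining the minimum, and let m* be the largest m such that Σ_{l=1}^m f_{l,η†} > 0 and h(η†,m) = h*. Then: (i) f_{m*,η†} > 0; (ii) μ_{η†(m*)}/f_{m*,η†} ≤ h*; and (iii) for every k ∈ {m*+1,…,n}, either Σ_{l=m*+1}^k f_{l,η†} = 0 or h* < (Σ_{l=m*+1}^k μ_{η†(l)})/(Σ_{l=m*+1}^k f_{l,η†}). -/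

import Mathlib

open Finset

/-- Lemma A.1 of the paper. If the minimum `h*` of the partial-sum rate
ratios `h(η,m) = (Σ_{l≤m} μ_{η(l)})/(Σ_{l≤m} f_{l,η})` is strictly less than the total
service rate, `η†` attains it and `m*` is the largest index where `η†` attains it, then
`f_{m*,η†} > 0`, `μ_{η†(m*)}/f_{m*,η†} ≤ h*`, and beyond `m*` every tail ratio either has
zero denominator or is strictly larger than `h*`. -/
theorem optimal_index_tail_inequalities
    (n : ℕ) (hn : 1 ≤ n) (μ : Fin n → ℝ) (hμ : ∀ l, 0 < μ l)
    (f : Equiv.Perm (Fin n) → Fin n → ℝ)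
    (hf0 : ∀ η l, 0 ≤ f η l)
    (hf1 : ∀ η, ∑ l, f η l = 1)
    (hstar : ℝ)
    (hleast : IsLeast {x : ℝ | ∃ (η : Equiv.Perm (Fin n)) (m : Fin n),
        0 < ∑ l ∈ Finset.univ.filter (· ≤ m), f η l ∧
        x = (∑ l ∈ Finset.univ.filter (· ≤ m), μ (η l))
              / (∑ l ∈ Finset.univ.filter (· ≤ m), f η l)} hstar)
    (hlt : hstar < ∑ l, μ l)
    (ηd : Equiv.Perm (Fin n)) (mstar : Fin n)
    (hpos : 0 < ∑ l ∈ Finset.univ.filter (· ≤ mstar), f ηd l)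
    (hval : (∑ l ∈ Finset.univ.filter (· ≤ mstar), μ (ηd l))
              / (∑ l ∈ Finset.univ.filter (· ≤ mstar), f ηd l) = hstar)
    (hmax : ∀ m : Fin n,
        0 < ∑ l ∈ Finset.univ.filter (· ≤ m), f ηd l →
        (∑ l ∈ Finset.univ.filter (· ≤ m), μ (ηd l))
            / (∑ l ∈ Finset.univ.filter (· ≤ m), f ηd l) = hstar →
        m ≤ mstar) :
    0 < f ηd mstar ∧
    μ (ηd mstar) / f ηd mstar ≤ hstar ∧
    (∀ k : Fin n, mstar < k →
      (∑ l ∈ Finset.univ.filter (fun l => mstar < l ∧ l ≤ k), f ηd l = 0) ∨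
      hstar < (∑ l ∈ Finset.univ.filter (fun l => mstar < l ∧ l ≤ k), μ (ηd l))
                / (∑ l ∈ Finset.univ.filter (fun l => mstar < l ∧ l ≤ k), f ηd l)) := by
  classical
  obtain ⟨-, hlb⟩ := hleast
  have hA : ∀ m : Fin n, Finset.univ.filter (· ≤ m) = Finset.Iic m := by
    intro m; ext l; simp
  have hB : ∀ k : Fin n,
      Finset.univ.filter (fun l => mstar < l ∧ l ≤ k) = Finset.Ioc mstar k := by
    intro k; ext l; simp
  simp only [hA] at hpos hval hmax
  simp only [hA, hB]
  have key : ∀ m : Fin n, 0 < ∑ l ∈ Finset.Iic m, f ηd l →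
      hstar ≤ (∑ l ∈ Finset.Iic m, μ (ηd l)) / (∑ l ∈ Finset.Iic m, f ηd l) := by
    intro m hm
    refine hlb ⟨ηd, m, ?_, ?_⟩
    · rw [hA]; exact hm
    · rw [hA]
  have hsplitI : ∀ g : Fin n → ℝ,
      ∑ l ∈ Finset.Iic mstar, g l = g mstar + ∑ l ∈ Finset.Iio mstar, g l := by
    intro g
    rw [← Finset.Iio_insert, Finset.sum_insert (by simp)]
  have hpred : (Finset.Iio mstar).Nonempty → ∃ m' : Fin n, Finset.Iio mstar = Finset.Iic m' := by
    rintro ⟨l, hl⟩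
    simp only [Finset.mem_Iio, Fin.lt_def] at hl
    refine ⟨⟨mstar.val - 1, by omega⟩, ?_⟩
    ext x; simp only [Finset.mem_Iio, Finset.mem_Iic, Fin.lt_def, Fin.le_def]; omega
  set Sf := ∑ l ∈ Finset.Iic mstar, f ηd l with hSf
  set Sμ := ∑ l ∈ Finset.Iic mstar, μ (ηd l) with hSμ
  have hSμSf : Sμ = hstar * Sf := by
    field_simp at hval; linarith [hval]
  -- Part (i)
  have part1 : 0 < f ηd mstar := by
    rcases lt_or_eq_of_le (hf0 ηd mstar) with h | h
    · exact h
    · exfalso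
      have hfm : f ηd mstar = 0 := h.symm
      have hsf := hsplitI (f ηd)
      have hsμ := hsplitI (fun l => μ (ηd l))
      have hIo : 0 < ∑ l ∈ Finset.Iio mstar, f ηd l := by
        rw [hSf] at hpos; rw [hfm] at hsf; linarith
      have hne : (Finset.Iio mstar).Nonempty := by
        by_contra hc
        rw [Finset.not_nonempty_iff_eq_empty] at hc
        rw [hc] at hIo; simp at hIo
      obtain ⟨m', hm'⟩ := hpred hne
      have hfeq : ∑ l ∈ Finset.Iic m', f ηd l = Sf := by
        rw [← hm']; rw [hfm] at hsf; linarith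
      have hμlt : ∑ l ∈ Finset.Iic m', μ (ηd l) < Sμ := by
        rw [← hm']
        have hμm := hμ (ηd mstar)
        rw [hSμ]; linarith
      have hk := key m' (by rw [hfeq]; exact hpos)
      rw [hfeq] at hk
      have h2 : (∑ l ∈ Finset.Iic m', μ (ηd l)) / Sf < Sμ / Sf :=
        (div_lt_div_iff_of_pos_right hpos).mpr hμlt
      linarith [hval]
  -- Part (ii)
  have part2 : μ (ηd mstar) / f ηd mstar ≤ hstar := by
    have hsf := hsplitI (f ηd)
    have hsμ := hsplitI (fun l => μ (ηd l))
    have hIo0 : 0 ≤ ∑ l ∈ Finset.Iio mstar, f ηd l :=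
      Finset.sum_nonneg fun l _ => hf0 ηd l
    rcases lt_or_eq_of_le hIo0 with hIo | hIo
    · -- prefix has positive f-mass
      have hne : (Finset.Iio mstar).Nonempty := by
        by_contra hc
        rw [Finset.not_nonempty_iff_eq_empty] at hc
        rw [hc] at hIo; simp at hIo
      obtain ⟨m', hm'⟩ := hpred hne
      have hk := key m' (by rw [← hm']; exact hIo)
      rw [← hm'] at hk
      rw [div_le_iff₀ part1]
      have h1 : hstar * (∑ l ∈ Finset.Iio mstar, f ηd l)
          ≤ ∑ l ∈ Finset.Iio mstar, μ (ηd l) := (le_div_iff₀ hIo).mp hk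
      -- Sμ = hstar * Sf, expand
      have h2 : hstar * Sf = hstar * f ηd mstar + hstar * ∑ l ∈ Finset.Iio mstar, f ηd l := by
        rw [hSf, hsf]; ring
      linarith
    · -- Sf = f mstar
      have hSfm : Sf = f ηd mstar := by rw [hSf]; linarith
      have hμle : μ (ηd mstar) ≤ Sμ := by
        have : 0 ≤ ∑ l ∈ Finset.Iio mstar, μ (ηd l) :=
          Finset.sum_nonneg fun l _ => (hμ (ηd l)).le
        rw [hSμ]; linarith
      rw [div_le_iff₀ part1, ← hSfm]
      linarith [hSμSf]
  refine ⟨part1, part2, ?_⟩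
  -- Part (iii)
  intro k hk
  have hTf0 : 0 ≤ ∑ l ∈ Finset.Ioc mstar k, f ηd l :=
    Finset.sum_nonneg fun l _ => hf0 ηd l
  rcases lt_or_eq_of_le hTf0 with hTf | hTf
  · right
    rw [lt_div_iff₀ hTf]
    by_contra hcon
    push_neg at hcon
    -- ratio at k is ≤ hstar, hence = hstar, hence k ≤ mstar : contradiction
    have hsplit : ∀ g : Fin n → ℝ, ∑ l ∈ Finset.Iic k, g l
        = ∑ l ∈ Finset.Iic mstar, g l + ∑ l ∈ Finset.Ioc mstar k, g l := by
      intro g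
      have hdisj : Disjoint (Finset.Iic mstar) (Finset.Ioc mstar k) := by
        rw [Finset.disjoint_left]
        intro a ha hb
        simp only [Finset.mem_Iic] at ha
        simp only [Finset.mem_Ioc] at hb
        exact absurd hb.1 (not_lt.mpr ha)
      have huni : Finset.Iic mstar ∪ Finset.Ioc mstar k = Finset.Iic k := by
        ext l
        simp only [Finset.mem_union, Finset.mem_Iic, Finset.mem_Ioc, Fin.le_def, Fin.lt_def]
        have := hk
        rw [Fin.lt_def] at this
        omega
      rw [← Finset.sum_union hdisj, huni]
    have hfk := hsplit (f ηd)
    have hμk := hsplit (fun l => μ (ηd l))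
    have hposk : 0 < ∑ l ∈ Finset.Iic k, f ηd l := by rw [hfk]; linarith
    have hkk := key k hposk
    have hle : (∑ l ∈ Finset.Iic k, μ (ηd l)) / (∑ l ∈ Finset.Iic k, f ηd l) ≤ hstar := by
      rw [div_le_iff₀ hposk, hμk, hfk]
      nlinarith [hSμSf]
    have heq : (∑ l ∈ Finset.Iic k, μ (ηd l)) / (∑ l ∈ Finset.Iic k, f ηd l) = hstar :=
      le_antisymm hle hkk
    exact absurd (hmax k hposk heq) (not_le.mpr hk)
  · left; exact hTf.symm
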